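/- Asymptotic regret of the EDM worst-case minimal circle: for integer k ≥ 2 and m ≥ 2, with Δ > 0, the cycle regret formula R = Δ^2·(k^{4/3}/4 + m(m−1)k^{2/3} − m(m−1)/3) holds for the sequence described, and choosing m = ⌊(k^{-2/3}/2)/Δ⌋ with Δ = (1−2k^{-1/3})/(k−1) gives R ≥ (1/2)k^{-2/3} + c·k^{-1} for some constant c and all sufficiently large k. -/

import Mathlib

open Finset in
/-- The regret of the explicit worst-case minimal circle of the k-state EDM machine:
m−1 up-steps of m states interlaced with down-steps of m−1 states, with samples at the
edges of the transition regions. -/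
noncomputable def edmCycleRegret (k m : ℕ) (Δ s : ℝ) : ℝ :=
  let L : ℝ := 2 * (m : ℝ) - 1
  let pred : ℕ → ℝ := fun j =>
    if j % 2 = 0 then s + ((j / 2 : ℕ) : ℝ) * Δ
    else s + ((m : ℝ) + ((j / 2 : ℕ) : ℝ)) * Δ
  let samp : ℕ → ℝ := fun j =>
    pred j + (if j % 2 = 0 ∧ j ≠ 2 * m - 2 then (m : ℝ) + 1 / 2
              else -((m : ℝ) - 3 / 2)) * Δ * (k : ℝ) ^ ((2 : ℝ) / 3)
  let xbar : ℝ := (∑ j ∈ range (2 * m - 1), samp j) / L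
  (∑ j ∈ range (2 * m - 1), ((samp j - pred j) ^ 2 - (samp j - xbar) ^ 2)) / L

noncomputable def edmPred (m : ℕ) (Δ s : ℝ) (j : ℕ) : ℝ :=
  if j % 2 = 0 then s + ((j / 2 : ℕ) : ℝ) * Δ
  else s + ((m : ℝ) + ((j / 2 : ℕ) : ℝ)) * Δ

noncomputable def edmSamp (k m : ℕ) (Δ s : ℝ) (j : ℕ) : ℝ :=
  edmPred m Δ s j + (if j % 2 = 0 ∧ j ≠ 2 * m - 2 then (m : ℝ) + 1 / 2
              else -((m : ℝ) - 3 / 2)) * Δ * (k : ℝ) ^ ((2 : ℝ) / 3)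

open Finset in
lemma edm_eq (k m : ℕ) (Δ s : ℝ) :
    edmCycleRegret k m Δ s =
      (∑ j ∈ range (2 * m - 1), ((edmSamp k m Δ s j - edmPred m Δ s j) ^ 2
        - (edmSamp k m Δ s j
            - (∑ j ∈ range (2 * m - 1), edmSamp k m Δ s j) / (2 * (m : ℝ) - 1)) ^ 2))
        / (2 * (m : ℝ) - 1) := rfl

open Finset in
lemma sum_split (f : ℕ → ℝ) : ∀ t : ℕ, ∑ j ∈ range (2 * t + 1), f j
    = ∑ i ∈ range (t + 1), f (2 * i) + ∑ i ∈ range t, f (2 * i + 1)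
  | 0 => by simp
  | (t + 1) => by
    rw [show 2 * (t + 1) + 1 = (2 * t + 1) + 1 + 1 by ring]
    rw [Finset.sum_range_succ, Finset.sum_range_succ, sum_split f t,
        Finset.sum_range_succ (fun i => f (2 * i)) (t + 1),
        Finset.sum_range_succ (fun i => f (2 * i + 1)) t,
        show 2 * (t + 1) = 2 * t + 1 + 1 by ring]
    ring

lemma sum_affine (α β : ℝ) : ∀ t : ℕ, ∑ i ∈ Finset.range t, (α + β * (i : ℝ))
    = t * α + β * ((t : ℝ) * ((t : ℝ) - 1) / 2)
  | 0 => by simp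
  | (t + 1) => by rw [Finset.sum_range_succ, sum_affine α β t]; push_cast; ring

lemma sum_shape (D α β : ℝ) : ∀ t : ℕ, ∑ i ∈ Finset.range t, (D - (α + β * (i : ℝ)) ^ 2)
    = (t : ℝ) * D - ((t : ℝ) * α ^ 2 + α * β * ((t : ℝ) * ((t : ℝ) - 1))
        + β ^ 2 * ((t : ℝ) * ((t : ℝ) - 1) * (2 * (t : ℝ) - 1) / 6))
  | 0 => by simp
  | (t + 1) => by rw [Finset.sum_range_succ, sum_shape D α β t]; push_cast; ring

open Finset in
lemma edm_identity (k n : ℕ) (Δ s : ℝ) (hk : 2 ≤ k) :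
    edmCycleRegret k (2 + n) Δ s
      = Δ ^ 2 * ((k : ℝ) ^ ((4 : ℝ) / 3) / 4
          + ((2 + n : ℕ) : ℝ) * (((2 + n : ℕ) : ℝ) - 1) * (k : ℝ) ^ ((2 : ℝ) / 3)
          - ((2 + n : ℕ) : ℝ) * (((2 + n : ℕ) : ℝ) - 1) / 3) := by
  have hk0 : (0:ℝ) < (k:ℝ) := by positivity
  set K := (k:ℝ) ^ ((2:ℝ)/3) with hK
  have hK4 : (k:ℝ) ^ ((4:ℝ)/3) = K ^ 2 := by
    rw [hK, ← Real.rpow_natCast ((k:ℝ) ^ ((2:ℝ)/3)) 2, ← Real.rpow_mul hk0.le]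
    norm_num
  set N := (n:ℝ) with hN
  have hNn : (0:ℝ) ≤ N := Nat.cast_nonneg n
  have hL : (2 * ((2 + n : ℕ) : ℝ) - 1) = 2 * N + 3 := by push_cast; ring
  have hLne : (2 * N + 3) ≠ 0 := by nlinarith
  -- samples at even indices below the top
  have hev : ∀ i ∈ range (n + 1), edmSamp k (2 + n) Δ s (2 * i)
      = (s + (N + 5/2) * Δ * K) + Δ * (i : ℝ) := by
    intro i hi
    simp only [mem_range] at hi
    simp only [edmSamp, edmPred]
    rw [if_pos (by omega : (2*i) % 2 = 0),
        if_pos ⟨by omega, by omega⟩,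
        (by omega : (2*i)/2 = i)]
    push_cast; ring
  have hevtop : edmSamp k (2 + n) Δ s (2 * (n + 1))
      = (s + (N + 1) * Δ) - (N + 1/2) * Δ * K := by
    simp only [edmSamp, edmPred]
    rw [if_pos (by omega : (2*(n+1)) % 2 = 0),
        if_neg (by omega : ¬((2*(n+1)) % 2 = 0 ∧ 2*(n+1) ≠ 2*(2+n)-2)),
        (by omega : (2*(n+1))/2 = n+1)]
    push_cast; ring
  have hod : ∀ i ∈ range (n + 1), edmSamp k (2 + n) Δ s (2 * i + 1)
      = (s + (N + 2) * Δ - (N + 1/2) * Δ * K) + Δ * (i : ℝ) := by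
    intro i hi
    simp only [edmSamp, edmPred]
    rw [if_neg (by omega : ¬((2*i+1) % 2 = 0)),
        if_neg (by omega : ¬((2*i+1) % 2 = 0 ∧ 2*i+1 ≠ 2*(2+n)-2)),
        (by omega : (2*i+1)/2 = i)]
    push_cast; ring
  have hS : ∑ j ∈ range (2 * (2 + n) - 1), edmSamp k (2 + n) Δ s j
      = (2 * N + 3) * (s + (N + 1) * Δ + Δ * K / 2) := by
    rw [show 2 * (2 + n) - 1 = 2 * (n + 1) + 1 by omega,
        sum_split (edmSamp k (2 + n) Δ s) (n + 1),
        Finset.sum_range_succ (fun i => edmSamp k (2 + n) Δ s (2 * i)) (n + 1),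
        Finset.sum_congr rfl hev, Finset.sum_congr rfl hod, hevtop,
        sum_affine, sum_affine]
    push_cast; ring
  have hxbar : (∑ j ∈ range (2 * (2 + n) - 1), edmSamp k (2 + n) Δ s j)
        / (2 * ((2 + n : ℕ) : ℝ) - 1) = s + (N + 1) * Δ + Δ * K / 2 := by
    rw [hS, hL, mul_comm, mul_div_assoc, div_self hLne, mul_one]
  rw [edm_eq, hxbar, hK4, hL]
  -- now evaluate the regret sum
  have hq_ev : ∀ i ∈ range (n + 1),
      ((edmSamp k (2+n) Δ s (2*i) - edmPred (2+n) Δ s (2*i)) ^ 2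
        - (edmSamp k (2+n) Δ s (2*i) - (s + (N + 1) * Δ + Δ * K / 2)) ^ 2)
      = ((N + 5/2) * Δ * K) ^ 2 - (((N + 2) * Δ * K - (N + 1) * Δ) + Δ * (i:ℝ)) ^ 2 := by
    intro i hi
    simp only [mem_range] at hi
    simp only [edmSamp, edmPred]
    rw [if_pos (by omega : (2*i) % 2 = 0),
        if_pos ⟨by omega, by omega⟩,
        (by omega : (2*i)/2 = i)]
    push_cast; ring
  have hq_top :
      ((edmSamp k (2+n) Δ s (2*(n+1)) - edmPred (2+n) Δ s (2*(n+1))) ^ 2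
        - (edmSamp k (2+n) Δ s (2*(n+1)) - (s + (N + 1) * Δ + Δ * K / 2)) ^ 2)
      = ((N + 1/2) * Δ * K) ^ 2 - ((N + 1) * Δ * K) ^ 2 := by
    simp only [edmSamp, edmPred]
    rw [if_pos (by omega : (2*(n+1)) % 2 = 0),
        if_neg (by omega : ¬((2*(n+1)) % 2 = 0 ∧ 2*(n+1) ≠ 2*(2+n)-2)),
        (by omega : (2*(n+1))/2 = n+1)]
    push_cast; ring
  have hq_od : ∀ i ∈ range (n + 1),
      ((edmSamp k (2+n) Δ s (2*i+1) - edmPred (2+n) Δ s (2*i+1)) ^ 2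
        - (edmSamp k (2+n) Δ s (2*i+1) - (s + (N + 1) * Δ + Δ * K / 2)) ^ 2)
      = ((N + 1/2) * Δ * K) ^ 2 - ((Δ - (N + 1) * Δ * K) + Δ * (i:ℝ)) ^ 2 := by
    intro i hi
    simp only [edmSamp, edmPred]
    rw [if_neg (by omega : ¬((2*i+1) % 2 = 0)),
        if_neg (by omega : ¬((2*i+1) % 2 = 0 ∧ 2*i+1 ≠ 2*(2+n)-2)),
        (by omega : (2*i+1)/2 = i)]
    push_cast; ring
  rw [show 2 * (2 + n) - 1 = 2 * (n + 1) + 1 by omega,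
      sum_split (fun j => (edmSamp k (2+n) Δ s j - edmPred (2+n) Δ s j) ^ 2
        - (edmSamp k (2+n) Δ s j - (s + (N + 1) * Δ + Δ * K / 2)) ^ 2) (n + 1),
      Finset.sum_range_succ (fun i => (edmSamp k (2+n) Δ s (2*i) - edmPred (2+n) Δ s (2*i)) ^ 2
        - (edmSamp k (2+n) Δ s (2*i) - (s + (N + 1) * Δ + Δ * K / 2)) ^ 2) (n + 1),
      Finset.sum_congr rfl hq_ev, Finset.sum_congr rfl hq_od, hq_top,
      sum_shape, sum_shape]
  rw [div_eq_iff hLne]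
  push_cast
  ring


set_option maxHeartbeats 2000000 in
/-- The cycle regret equals Δ²(k^{4/3}/4 + m(m−1)k^{2/3} − m(m−1)/3), and with the EDM
spacing Δ = (1−2k^{−1/3})/(k−1) and m = ⌊(k^{−2/3}/2)/Δ⌋ the regret is at least
(1/2)k^{−2/3} + c·k^{−1} for some constant c and all sufficiently large k. -/
theorem edm_cycle_regret_lower_bound :
    (∀ (k m : ℕ) (Δ s : ℝ), 2 ≤ k → 2 ≤ m → 0 < Δ →
      edmCycleRegret k m Δ s
        = Δ ^ 2 * ((k : ℝ) ^ ((4 : ℝ) / 3) / 4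
            + (m : ℝ) * ((m : ℝ) - 1) * (k : ℝ) ^ ((2 : ℝ) / 3)
            - (m : ℝ) * ((m : ℝ) - 1) / 3))
    ∧ ∃ c : ℝ, ∃ K : ℕ, ∀ k : ℕ, K ≤ k → ∀ s : ℝ,
        edmCycleRegret k
            ⌊((k : ℝ) ^ (-(2 : ℝ) / 3) / 2)
              / ((1 - 2 * (k : ℝ) ^ (-(1 : ℝ) / 3)) / ((k : ℝ) - 1))⌋₊
            ((1 - 2 * (k : ℝ) ^ (-(1 : ℝ) / 3)) / ((k : ℝ) - 1)) s
          ≥ (1 / 2) * (k : ℝ) ^ (-(2 : ℝ) / 3) + c * (k : ℝ) ^ (-(1 : ℝ)) := by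
  have part1 : ∀ (k m : ℕ) (Δ s : ℝ), 2 ≤ k → 2 ≤ m → 0 < Δ →
      edmCycleRegret k m Δ s
        = Δ ^ 2 * ((k : ℝ) ^ ((4 : ℝ) / 3) / 4
            + (m : ℝ) * ((m : ℝ) - 1) * (k : ℝ) ^ ((2 : ℝ) / 3)
            - (m : ℝ) * ((m : ℝ) - 1) / 3) := by
    intro k m Δ s hk hm hΔ
    obtain ⟨n, rfl⟩ : ∃ n, m = 2 + n := ⟨m - 2, by omega⟩
    exact edm_identity k n Δ s hk
  refine ⟨part1, -5, 1000000, ?_⟩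
  intro k hk s
  have hk2 : 2 ≤ k := le_trans (by norm_num) hk
  have hx : (1000000 : ℝ) ≤ (k : ℝ) := by exact_mod_cast hk
  have hx0 : (0 : ℝ) < (k : ℝ) := by linarith
  set u := (k : ℝ) ^ (-(1 : ℝ)/3) with hu
  have hu_pos : 0 < u := Real.rpow_pos_of_pos hx0 _
  have hu3 : u ^ 3 = (k : ℝ) ^ (-(1 : ℝ)) := by
    rw [hu, ← Real.rpow_natCast ((k:ℝ) ^ (-(1:ℝ)/3)) 3, ← Real.rpow_mul hx0.le]
    norm_num
  have hu2 : (k : ℝ) ^ (-(2 : ℝ)/3) = u ^ 2 := by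
    rw [hu, ← Real.rpow_natCast ((k:ℝ) ^ (-(1:ℝ)/3)) 2, ← Real.rpow_mul hx0.le]
    norm_num
  have hxinv : (k : ℝ) ^ (-(1 : ℝ)) = ((k:ℝ))⁻¹ := by
    rw [Real.rpow_neg_one]
  have hu3' : u ^ 3 * (k : ℝ) = 1 := by
    rw [hu3, hxinv]; field_simp
  have hule : u ≤ 1/100 := by
    by_contra h
    push_neg at h
    have h1 : (1/100 : ℝ)^3 < u^3 := by nlinarith [hu_pos]
    have h2 : u^3 ≤ 1/1000000 := by
      rw [hu3, hxinv]
      rw [inv_le_comm₀ (by linarith) (by norm_num)]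
      norm_num; linarith
    norm_num at h1
    linarith
  set Δ := (1 - 2*u)/((k:ℝ) - 1) with hd
  have hΔpos : 0 < Δ := by
    apply div_pos <;> nlinarith
  have hΔle : Δ ≤ 2 * u^3 := by
    rw [hd, div_le_iff₀ (by nlinarith : (0:ℝ) < (k:ℝ) - 1)]
    have expand : 2*u^3*((k:ℝ)-1) = 2*(u^3*(k:ℝ)) - 2*u^3 := by ring
    rw [expand, hu3']
    nlinarith [hu_pos, hule, pow_pos hu_pos 3]
  have hΔge : (1 - 2*u) * u^3 ≤ Δ := by
    rw [hd, le_div_iff₀ (by nlinarith : (0:ℝ) < (k:ℝ) - 1)]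
    have e : (1 - 2*u) * u^3 * ((k:ℝ) - 1) = (1 - 2*u) * (u^3 * (k:ℝ)) - (1-2*u)*u^3 := by ring
    rw [e, hu3']
    nlinarith
  set T := ((k : ℝ) ^ (-(2 : ℝ)/3)/2)/Δ with ht
  have hTval : Δ * T = u^2/2 := by
    rw [ht, hu2]
    field_simp
  have hT3 : (3:ℝ) ≤ T := by
    rw [ht, hu2, le_div_iff₀ hΔpos]
    nlinarith [hu_pos, hule, hΔle, sq_nonneg u]
  set m := ⌊T⌋₊ with hmdef
  have hm2 : 2 ≤ m := Nat.le_floor (by push_cast; linarith)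
  have hmle : (m:ℝ) ≤ T := Nat.floor_le (by linarith)
  have hmgt : T < (m:ℝ) + 1 := Nat.lt_floor_add_one T
  have ha1 : Δ * (m:ℝ) ≤ u^2/2 := by
    have := mul_le_mul_of_nonneg_left hmle hΔpos.le
    linarith
  have ha2 : u^2/2 - Δ ≤ Δ * (m:ℝ) := by
    have := mul_lt_mul_of_pos_left hmgt hΔpos
    nlinarith
  have hb2 : u^2/2 - 2*Δ ≤ Δ * ((m:ℝ) - 1) := by nlinarith [ha2]
  have hb1 : Δ * ((m:ℝ) - 1) ≤ u^2/2 := by nlinarith [ha1, hΔpos]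
  have hb0 : (0:ℝ) ≤ u^2/2 - 2*Δ := by nlinarith [hΔle, hule, hu_pos, sq_nonneg u]
  -- apply the identity
  rw [part1 k m Δ s hk2 hm2 hΔpos]
  set P := (k:ℝ) ^ ((2:ℝ)/3) with hp
  have hP0 : 0 < P := Real.rpow_pos_of_pos hx0 _
  have hP : u^2 * P = 1 := by
    rw [hu, hp, ← Real.rpow_natCast ((k:ℝ) ^ (-(1:ℝ)/3)) 2, ← Real.rpow_mul hx0.le,
        ← Real.rpow_add hx0]
    norm_num
  have hP4 : (k:ℝ) ^ ((4:ℝ)/3) = P^2 := by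
    rw [hp, ← Real.rpow_natCast ((k:ℝ) ^ ((2:ℝ)/3)) 2, ← Real.rpow_mul hx0.le]
    norm_num
  rw [hP4, hu2, ← hu3]
  set M := (m:ℝ) with hM
  have hM2 : (2:ℝ) ≤ M := by rw [hM]; exact_mod_cast hm2
  -- main estimates
  have e1 : u^2/4 - u^3 ≤ Δ^2 * P^2 / 4 := by
    have hdP : (1 - 2*u) * u ≤ Δ * P := by
      have h1 := mul_le_mul_of_nonneg_right hΔge hP0.le
      have h2 : (1 - 2*u) * u^3 * P = ((1-2*u)*u) * (u^2 * P) := by ring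
      rw [h2, hP, mul_one] at h1
      exact h1
    have hdP0 : (0:ℝ) ≤ (1 - 2*u) * u := by nlinarith
    nlinarith [mul_self_le_mul_self hdP0 hdP, hu_pos, hule]
  have hab : (u^2/2 - Δ) * (u^2/2 - 2*Δ) ≤ (Δ * M) * (Δ * (M - 1)) := by
    apply mul_le_mul ha2 hb2 hb0
    positivity
  have e2 : u^2/4 - 3*u^3 ≤ Δ^2 * (M * (M-1)) * P := by
    have h1 := mul_le_mul_of_nonneg_right hab hP0.le
    have h2 : (u^2/2 - Δ) * (u^2/2 - 2*Δ) * P = u^2/4 - 3*Δ/2 + 2*Δ^2*P + (u^2/4 - 3*Δ/2)*(u^2*P - 1) := by ring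
    rw [hP] at h2
    nlinarith [h1, h2, sq_nonneg Δ, hP0, hΔle, hu_pos, mul_pos (mul_pos hΔpos hΔpos) hP0]
  have e3 : Δ^2 * (M * (M-1)) ≤ u^3/4 := by
    have h1 : (Δ * M) * (Δ * (M-1)) ≤ (u^2/2) * (u^2/2) := by
      apply mul_le_mul ha1 hb1 (by linarith [hb2, hb0]) (by nlinarith [hu_pos])
    nlinarith [h1, hu_pos, hule]
  nlinarith [e1, e2, e3]
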